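/- Let H and K be complex Hilbert spaces, d: K → H a bounded linear operator with d ∘ d* = I_H, and S a unitary operator on K with S² = I. Set D = d ∘ S ∘ d*: H → H. Then for every g ∈ H: D g = g if and only if S(d* g) = d* g, and D g = −g if and only if S(d* g) = −d* g. -/
import Mathlib


open ContinuousLinearMap

open scoped InnerProductSpace in
private lemma eq_of_inner_eq_norm_sq {K : Type*} [NormedAddCommGroup K]
    [InnerProductSpace ℂ K] {x y : K} (hxy : ‖x‖ = ‖y‖)
    (h : ⟪x, y⟫_ℂ = (‖y‖ : ℂ) ^ 2) : x = y := by
  have hyx : ⟪y, x⟫_ℂ = (‖y‖ : ℂ) ^ 2 := by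
    rw [← inner_conj_symm, h]; simp
  have hxx : ⟪x, x⟫_ℂ = (‖y‖ : ℂ) ^ 2 := by
    rw [inner_self_eq_norm_sq_to_K, hxy]; exact_mod_cast rfl
  have hyy : ⟪y, y⟫_ℂ = (‖y‖ : ℂ) ^ 2 := inner_self_eq_norm_sq_to_K y
  have h0 : ⟪x - y, x - y⟫_ℂ = 0 := by
    rw [inner_sub_left, inner_sub_right, inner_sub_right, hxx, hyy, h, hyx]
    ring
  exact sub_eq_zero.mp (inner_self_eq_zero.mp h0)

open scoped InnerProductSpace in
/-- Let `H`, `K` be complex Hilbert spaces, `d : K → H` bounded with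
`d ∘ d* = I`, and `S` a unitary operator on `K` with `S² = I`. Set `D = d S d*`.
Then `D g = g ↔ S (d* g) = d* g` and `D g = −g ↔ S (d* g) = −d* g` for every `g ∈ H`. -/
theorem disc_eigenvalue_pm_one_iff_shift_fixes
    {H K : Type*} [NormedAddCommGroup H] [InnerProductSpace ℂ H] [CompleteSpace H]
    [NormedAddCommGroup K] [InnerProductSpace ℂ K] [CompleteSpace K]
    (d : K →L[ℂ] H) (S : K →L[ℂ] K)
    (hd : d.comp (ContinuousLinearMap.adjoint d) = ContinuousLinearMap.id ℂ H)
    (hS_iso : ∀ x : K, ‖S x‖ = ‖x‖) (hS_surj : Function.Surjective S)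
    (hS2 : ∀ x : K, S (S x) = x) :
    ∀ g : H,
      ((d.comp (S.comp (ContinuousLinearMap.adjoint d))) g = g ↔
        S ((ContinuousLinearMap.adjoint d) g) = (ContinuousLinearMap.adjoint d) g) ∧
      ((d.comp (S.comp (ContinuousLinearMap.adjoint d))) g = -g ↔
        S ((ContinuousLinearMap.adjoint d) g) = -((ContinuousLinearMap.adjoint d) g)) := by
  intro g
  set d' := ContinuousLinearMap.adjoint d with hd'
  have hdd : ∀ h : H, d (d' h) = h := fun h => by
    have := congrArg (fun f => f h) hd
    simpa using this
  -- ‖d' g‖ = ‖g‖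
  have hnorm : ‖d' g‖ = ‖g‖ := by
    have h1 : ⟪d' g, d' g⟫_ℂ = ⟪g, g⟫_ℂ := by
      rw [ContinuousLinearMap.adjoint_inner_left, hdd]
    have := congrArg Complex.re h1
    rw [inner_self_eq_norm_sq_to_K, inner_self_eq_norm_sq_to_K] at h1
    have : (‖d' g‖ : ℂ) ^ 2 = (‖g‖ : ℂ) ^ 2 := h1
    have hre : ‖d' g‖ ^ 2 = ‖g‖ ^ 2 := by exact_mod_cast this
    nlinarith [norm_nonneg (d' g), norm_nonneg g]
  have hSnorm : ‖S (d' g)‖ = ‖g‖ := by rw [hS_iso, hnorm]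
  -- key inner product: ⟪S d' g, d' g⟫ = ⟪D g, g⟫
  have hkey : ⟪S (d' g), d' g⟫_ℂ = ⟪(d.comp (S.comp d')) g, g⟫_ℂ := by
    simp only [ContinuousLinearMap.comp_apply]
    exact ContinuousLinearMap.adjoint_inner_right d _ _
  constructor
  · constructor
    · intro hDg
      apply eq_of_inner_eq_norm_sq (by rw [hSnorm, hnorm])
      rw [hkey, hDg, inner_self_eq_norm_sq_to_K, hnorm]; exact_mod_cast rfl
    · intro hfix
      simp only [ContinuousLinearMap.comp_apply]
      rw [hfix, hdd]
  · constructor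
    · intro hDg
      have : S (d' g) = d' (-g) := by
        apply eq_of_inner_eq_norm_sq
        · rw [hSnorm]; simp [hnorm]
        · rw [map_neg]
          rw [inner_neg_right, hkey, hDg, inner_neg_left, neg_neg,
            inner_self_eq_norm_sq_to_K]
          simp [hnorm]
      simpa using this
    · intro hfix
      simp only [ContinuousLinearMap.comp_apply]
      rw [hfix, map_neg, hdd]
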